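/- Let x ∈ A, let n' ∈ {1,…,N}, and let δ > 1 be a real number such that δ·x_{n'} ∈ conv(𝒳). Define z ∈ ℂ^{N+1} by z_{n'} = δ·x_{n'} and z_n = x_n for all n ≠ n'. Then for every u ∈ {1,…,U} and every real λ > 0, f_u(z) − f_u(x) + λ‖z‖₁ − λ‖x‖₁ ≥ (λ − L_u)·(δ − 1)·|x_{n'}|. -/

import Mathlib

open Complex Finset

noncomputable section

/-- The set of `K`-th roots of unity in `ℂ`. -/
def rootsSet (K : ℕ) : Set ℂ :=
  {z : ℂ | ∃ k : ℕ, k < K ∧ z = Complex.exp ((2 * Real.pi * k / K : ℝ) * Complex.I)}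

/-- The convex hull (over `ℝ`) of the `K`-th roots of unity. -/
def hullSet (K : ℕ) : Set ℂ := convexHull ℝ (rootsSet K)

/-- The relaxed feasible set `A`. -/
def feasA (K N : ℕ) : Set (Fin (N + 1) → ℂ) :=
  {x | x 0 = 1 ∧ ∀ n : Fin (N + 1), n ≠ 0 → x n ∈ hullSet K}

/-- The discrete feasible set `D`. -/
def feasD (K N : ℕ) : Set (Fin (N + 1) → ℂ) :=
  {x | x 0 = 1 ∧ ∀ n : Fin (N + 1), n ≠ 0 → x n ∈ rootsSet K}

/-- The ℓ1 norm of a complex vector. -/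
def norm1 {N : ℕ} (x : Fin (N + 1) → ℂ) : ℝ := ∑ n, ‖x n‖

/-- The ℓ2 norm of a complex vector. -/
def norm2 {N : ℕ} (x : Fin (N + 1) → ℂ) : ℝ := Real.sqrt (∑ n, ‖x n‖ ^ 2)

/-- The (real) quadratic form `x^H C x`. -/
def quadForm {N : ℕ} (C : Matrix (Fin (N + 1)) (Fin (N + 1)) ℂ)
    (x : Fin (N + 1) → ℂ) : ℝ :=
  (dotProduct (star x) (Matrix.mulVec C x)).re

/-- The Frobenius norm of a complex matrix. -/
def frobNorm {N : ℕ} (M : Matrix (Fin (N + 1)) (Fin (N + 1)) ℂ) : ℝ :=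
  Real.sqrt (∑ i, ∑ j, ‖M i j‖ ^ 2)

/-- The SINR-type objective `f_u`. -/
def fObj {N U : ℕ} (C : Fin U → Fin U → Matrix (Fin (N + 1)) (Fin (N + 1)) ℂ)
    (σ : Fin U → ℝ) (u : Fin U) (x : Fin (N + 1) → ℂ) : ℝ :=
  quadForm (C u u) x /
    ((∑ u' ∈ Finset.univ.erase u, quadForm (C u u') x) + σ u ^ 2)

/-- The Lipschitz constant `L_u`. -/
def Lconst {N U : ℕ} (C : Fin U → Fin U → Matrix (Fin (N + 1)) (Fin (N + 1)) ℂ)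
    (σ : Fin U → ℝ) (u : Fin U) : ℝ :=
  2 * Real.sqrt ((N : ℝ) + 1) * frobNorm (C u u) / σ u ^ 2 *
    (1 + ((N : ℝ) + 1) * frobNorm (∑ u' ∈ Finset.univ.erase u, C u u') / σ u ^ 2)

/-- The minimum of the `f_u` over all users. -/
def minObj {N U : ℕ} (C : Fin U → Fin U → Matrix (Fin (N + 1)) (Fin (N + 1)) ℂ)
    (σ : Fin U → ℝ) (x : Fin (N + 1) → ℂ) : ℝ :=
  ⨅ u : Fin U, fObj C σ u x

/-- The penalized objective `f_0`. -/
def f0 {N U : ℕ} (C : Fin U → Fin U → Matrix (Fin (N + 1)) (Fin (N + 1)) ℂ)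
    (σ : Fin U → ℝ) (lam : ℝ) (x : Fin (N + 1) → ℂ) : ℝ :=
  minObj C σ x + lam * norm1 x

/-! ### Auxiliary lemmas -/

lemma hull_abs_le_one {K : ℕ} {w : ℂ} (hw : w ∈ hullSet K) : ‖w‖ ≤ 1 := by
  have hsub : rootsSet K ⊆ Metric.closedBall 0 1 := by
    rintro z ⟨k, _, rfl⟩
    simp [Metric.mem_closedBall, dist_zero_right, Complex.norm_exp]
  have := convexHull_min hsub (convex_closedBall (0:ℂ) 1) hw
  simpa [Metric.mem_closedBall, dist_zero_right] using this

lemma cs_card {ι : Type*} (s : Finset ι) (f : ι → ℝ) :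
    ∑ i ∈ s, f i ≤ Real.sqrt s.card * Real.sqrt (∑ i ∈ s, f i ^ 2) := by
  simpa using Real.sum_mul_le_sqrt_mul_sqrt s (fun _ => 1) f

lemma frobNorm_nonneg {N : ℕ} (M : Matrix (Fin (N + 1)) (Fin (N + 1)) ℂ) :
    0 ≤ frobNorm M := Real.sqrt_nonneg _

lemma row_sum_le {N : ℕ} (M : Matrix (Fin (N+1)) (Fin (N+1)) ℂ) (i : Fin (N+1)) :
    ∑ j, ‖M i j‖ ≤ Real.sqrt ((N:ℝ)+1) * frobNorm M := by
  refine (cs_card Finset.univ (fun j => ‖M i j‖)).trans ?_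
  apply mul_le_mul
  · apply Real.sqrt_le_sqrt; simp
  · exact Real.sqrt_le_sqrt <| Finset.single_le_sum
      (f := fun i => ∑ j, ‖M i j‖^2) (fun i _ => by positivity) (mem_univ i)
  · positivity
  · positivity

lemma col_sum_le {N : ℕ} (M : Matrix (Fin (N+1)) (Fin (N+1)) ℂ) (j : Fin (N+1)) :
    ∑ i, ‖M i j‖ ≤ Real.sqrt ((N:ℝ)+1) * frobNorm M := by
  refine (cs_card Finset.univ (fun i => ‖M i j‖)).trans ?_
  apply mul_le_mul
  · apply Real.sqrt_le_sqrt; simp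
  · refine Real.sqrt_le_sqrt <| Finset.sum_le_sum fun i _ => ?_
    exact Finset.single_le_sum (f := fun j => ‖M i j‖^2)
      (fun _ _ => by positivity) (mem_univ j)
  · positivity
  · positivity

lemma quadForm_expand {N : ℕ} (M : Matrix (Fin (N+1)) (Fin (N+1)) ℂ) (y : Fin (N+1) → ℂ) :
    quadForm M y = (∑ i, (starRingEnd ℂ) (y i) * ∑ j, M i j * y j).re := by
  simp [quadForm, dotProduct, Matrix.mulVec]

lemma abs_quadForm_le {N : ℕ} (M : Matrix (Fin (N+1)) (Fin (N+1)) ℂ)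
    (y : Fin (N+1) → ℂ) (hy : ∀ n, ‖y n‖ ≤ 1) :
    |quadForm M y| ≤ ((N:ℝ)+1) * frobNorm M := by
  rw [quadForm_expand]
  have h1 : |(∑ i, (starRingEnd ℂ) (y i) * ∑ j, M i j * y j).re|
      ≤ ‖∑ i, (starRingEnd ℂ) (y i) * ∑ j, M i j * y j‖ :=
    Complex.abs_re_le_norm _
  refine h1.trans ?_
  have h2 : ‖∑ i, (starRingEnd ℂ) (y i) * ∑ j, M i j * y j‖
      ≤ ∑ i, ∑ j, ‖M i j‖ := by
    refine (norm_sum_le _ _).trans (Finset.sum_le_sum fun i _ => ?_)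
    rw [norm_mul]
    have ha : ‖(starRingEnd ℂ) (y i)‖ ≤ 1 := by simpa using hy i
    have hb : ‖∑ j, M i j * y j‖ ≤ ∑ j, ‖M i j‖ := by
      refine (norm_sum_le _ _).trans (Finset.sum_le_sum fun j _ => ?_)
      rw [norm_mul]
      exact mul_le_of_le_one_right (norm_nonneg _) (hy j)
    calc ‖(starRingEnd ℂ) (y i)‖ * ‖∑ j, M i j * y j‖
        ≤ 1 * (∑ j, ‖M i j‖) :=
          mul_le_mul ha hb (norm_nonneg _) zero_le_one
      _ = ∑ j, ‖M i j‖ := one_mul _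
  refine h2.trans ?_
  have h3 := cs_card (Finset.univ ×ˢ Finset.univ)
    (fun p : Fin (N+1) × Fin (N+1) => ‖M p.1 p.2‖)
  simp only [Finset.sum_product] at h3
  refine h3.trans ?_
  have hc : (((Finset.univ ×ˢ Finset.univ : Finset (Fin (N+1) × Fin (N+1))).card : ℝ))
      = ((N:ℝ)+1) * ((N:ℝ)+1) := by
    simp [Finset.card_product]
  rw [hc, Real.sqrt_mul_self (by positivity)]
  exact le_refl _

lemma quadForm_update_diff {N : ℕ} (M : Matrix (Fin (N+1)) (Fin (N+1)) ℂ)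
    (x : Fin (N+1) → ℂ) (n' : Fin (N+1)) (c : ℂ)
    (hx : ∀ n, ‖x n‖ ≤ 1)
    (hz : ∀ n, ‖Function.update x n' c n‖ ≤ 1) :
    |quadForm M (Function.update x n' c) - quadForm M x|
      ≤ 2 * Real.sqrt ((N:ℝ)+1) * frobNorm M * ‖c - x n'‖ := by
  set z := Function.update x n' c with hzdef
  set e := c - x n' with hedef
  set w : Fin (N+1) → ℂ := Pi.single n' e with hwdef
  have hzxw : z = x + w := by
    funext n
    by_cases h : n = n'
    · subst h
      simp [hzdef, hwdef, hedef]
    · simp [hzdef, hwdef, Function.update_of_ne h, Pi.single_eq_of_ne h]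
  have key : quadForm M z - quadForm M x
      = (dotProduct (star w) (M.mulVec z)).re
        + (dotProduct (star x) (M.mulVec w)).re := by
    have h1 : M.mulVec z = M.mulVec x + M.mulVec w := by rw [hzxw, Matrix.mulVec_add]
    have h2 : star z = star x + star w := by rw [hzxw, star_add]
    simp only [quadForm, h1, h2, add_dotProduct, dotProduct_add, Complex.add_re]
    ring
  have hMw : ∀ i, M.mulVec w i = M i n' * e := by
    intro i
    simp [Matrix.mulVec, dotProduct, hwdef, Pi.single_apply, mul_ite]
  have hA : dotProduct (star w) (M.mulVec z)
      = (starRingEnd ℂ) e * (M.mulVec z n') := by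
    simp [dotProduct, hwdef, Pi.single_apply, apply_ite (starRingEnd ℂ), ite_mul]
  have hAbound : ‖dotProduct (star w) (M.mulVec z)‖
      ≤ Real.sqrt ((N:ℝ)+1) * frobNorm M * ‖e‖ := by
    rw [hA, norm_mul]
    have h1 : ‖M.mulVec z n'‖ ≤ Real.sqrt ((N:ℝ)+1) * frobNorm M := by
      have : ‖M.mulVec z n'‖ ≤ ∑ j, ‖M n' j‖ := by
        simp only [Matrix.mulVec, dotProduct]
        refine (norm_sum_le _ _).trans (Finset.sum_le_sum fun j _ => ?_)
        rw [norm_mul]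
        exact mul_le_of_le_one_right (norm_nonneg _) (hz j)
      exact this.trans (row_sum_le M n')
    calc ‖(starRingEnd ℂ) e‖ * ‖M.mulVec z n'‖
        = ‖M.mulVec z n'‖ * ‖e‖ := by
          rw [Complex.norm_conj]; ring
      _ ≤ Real.sqrt ((N:ℝ)+1) * frobNorm M * ‖e‖ :=
          mul_le_mul_of_nonneg_right h1 (norm_nonneg _)
  have hBbound : ‖dotProduct (star x) (M.mulVec w)‖
      ≤ Real.sqrt ((N:ℝ)+1) * frobNorm M * ‖e‖ := by
    have hB : dotProduct (star x) (M.mulVec w)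
        = ∑ i, (starRingEnd ℂ) (x i) * (M i n' * e) := by
      simp [dotProduct, hMw]
    rw [hB]
    have h1 : ∀ i, ‖(starRingEnd ℂ) (x i) * (M i n' * e)‖
        ≤ ‖M i n'‖ * ‖e‖ := by
      intro i
      rw [norm_mul, norm_mul]
      have : ‖(starRingEnd ℂ) (x i)‖ ≤ 1 := by simpa using hx i
      exact mul_le_of_le_one_left (by positivity) this
    refine (norm_sum_le _ _).trans ((Finset.sum_le_sum fun i _ => h1 i).trans ?_)
    rw [← Finset.sum_mul]
    exact mul_le_mul_of_nonneg_right (col_sum_le M n') (norm_nonneg _)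
  rw [key]
  calc |(dotProduct (star w) (M.mulVec z)).re
        + (dotProduct (star x) (M.mulVec w)).re|
      ≤ |(dotProduct (star w) (M.mulVec z)).re|
        + |(dotProduct (star x) (M.mulVec w)).re| := abs_add_le _ _
    _ ≤ ‖dotProduct (star w) (M.mulVec z)‖
        + ‖dotProduct (star x) (M.mulVec w)‖ :=
          add_le_add (Complex.abs_re_le_norm _) (Complex.abs_re_le_norm _)
    _ ≤ Real.sqrt ((N:ℝ)+1) * frobNorm M * ‖e‖
        + Real.sqrt ((N:ℝ)+1) * frobNorm M * ‖e‖ := add_le_add hAbound hBbound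
    _ = 2 * Real.sqrt ((N:ℝ)+1) * frobNorm M * ‖e‖ := by ring

lemma quadForm_rankOne_nonneg {N : ℕ} (a x : Fin (N+1) → ℂ) :
    0 ≤ quadForm (Matrix.vecMulVec a (star a)) x := by
  have h : dotProduct (star x) ((Matrix.vecMulVec a (star a)).mulVec x)
      = (starRingEnd ℂ) (dotProduct (star a) x) * (dotProduct (star a) x) := by
    simp only [Matrix.mulVec, dotProduct, Matrix.vecMulVec_apply, map_sum, map_mul,
      Pi.star_apply, Complex.star_def, Complex.conj_conj, Finset.sum_mul, Finset.mul_sum]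
    rw [Finset.sum_comm]
    refine Finset.sum_congr rfl fun i _ => Finset.sum_congr rfl fun j _ => by ring
  rw [quadForm, h]
  have : ((starRingEnd ℂ) (dotProduct (star a) x) * (dotProduct (star a) x)).re
      = Complex.normSq (dotProduct (star a) x) := by
    simp [Complex.normSq_apply, Complex.mul_re]
  rw [this]
  exact Complex.normSq_nonneg _

lemma quadForm_sum {N : ℕ} {ι : Type*} (s : Finset ι)
    (M : ι → Matrix (Fin (N+1)) (Fin (N+1)) ℂ) (x : Fin (N+1) → ℂ) :
    quadForm (∑ i ∈ s, M i) x = ∑ i ∈ s, quadForm (M i) x := by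
  have h1 : (∑ i ∈ s, M i).mulVec x = ∑ i ∈ s, (M i).mulVec x := by
    funext j
    simp only [Matrix.mulVec, dotProduct, Matrix.sum_apply, Finset.sum_mul,
      Finset.sum_apply]
    rw [Finset.sum_comm]
  simp only [quadForm, h1, dotProduct, Finset.sum_apply, Finset.mul_sum]
  rw [Finset.sum_comm]
  simp [Complex.re_sum]
set_option maxHeartbeats 1000000 in
theorem stmt5
    (K N U : ℕ) (hK : 2 ≤ K) (hN : 1 ≤ N) (hU : 1 ≤ U)
    (a : Fin U → Fin U → (Fin (N + 1) → ℂ))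
    (C : Fin U → Fin U → Matrix (Fin (N + 1)) (Fin (N + 1)) ℂ)
    (hC : ∀ u u' : Fin U, C u u' = Matrix.vecMulVec (a u u') (star (a u u')))
    (σ : Fin U → ℝ) (hσ : ∀ u, 0 < σ u)
    (x : Fin (N + 1) → ℂ) (hxA : x ∈ feasA K N)
    (n' : Fin (N + 1)) (hn' : n' ≠ 0)
    (δ : ℝ) (hδ : 1 < δ) (hδx : (δ : ℂ) * x n' ∈ hullSet K)
    (u : Fin U) (lam : ℝ) (hlam : 0 < lam) :
    fObj C σ u (Function.update x n' ((δ : ℂ) * x n')) - fObj C σ u x +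
        lam * norm1 (Function.update x n' ((δ : ℂ) * x n')) - lam * norm1 x ≥
      (lam - Lconst C σ u) * (δ - 1) * ‖x n'‖ := by
  obtain ⟨hx0, hxh⟩ := hxA
  set z := Function.update x n' ((δ:ℂ) * x n') with hzdef
  set d := (δ - 1) * ‖x n'‖ with hddef
  have hd0 : 0 ≤ d := mul_nonneg (by linarith) (norm_nonneg _)
  have hx1 : ∀ n, ‖x n‖ ≤ 1 := by
    intro n
    by_cases h : n = 0
    · subst h; rw [hx0]; simp
    · exact hull_abs_le_one (hxh n h)
  have hz1 : ∀ n, ‖z n‖ ≤ 1 := by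
    intro n
    by_cases h : n = n'
    · subst h; rw [hzdef, Function.update_self]; exact hull_abs_le_one hδx
    · rw [hzdef, Function.update_of_ne h]; exact hx1 n
  have habse : ‖(δ:ℂ) * x n' - x n'‖ = d := by
    have he : (δ:ℂ) * x n' - x n' = ((δ - 1 : ℝ) : ℂ) * x n' := by push_cast; ring
    rw [he, norm_mul, Complex.norm_real, Real.norm_eq_abs, abs_of_pos (by linarith : (0:ℝ) < δ - 1)]
  -- ℓ1 norms
  have hnorm1 : norm1 z = norm1 x + d := by
    have hsplit : ∀ y : Fin (N+1) → ℂ,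
        norm1 y = ‖y n'‖ + ∑ n ∈ Finset.univ.erase n', ‖y n‖ :=
      fun y => (Finset.add_sum_erase _ _ (mem_univ n')).symm
    rw [hsplit z, hsplit x]
    have h1 : ∑ n ∈ Finset.univ.erase n', ‖z n‖
        = ∑ n ∈ Finset.univ.erase n', ‖x n‖ :=
      Finset.sum_congr rfl fun n hn => by
        rw [hzdef, Function.update_of_ne (Finset.ne_of_mem_erase hn)]
    have h2 : ‖z n'‖ = δ * ‖x n'‖ := by
      rw [hzdef, Function.update_self, norm_mul, Complex.norm_real, Real.norm_eq_abs,
        abs_of_pos (by linarith : (0:ℝ) < δ)]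
    rw [h1, h2, hddef]; ring
  -- notation
  set R := Real.sqrt ((N:ℝ)+1) with hRdef
  set F := frobNorm (C u u) with hFdef
  set Msum := ∑ u' ∈ Finset.univ.erase u, C u u' with hMsumdef
  set S := frobNorm Msum with hSdef
  set s2 := σ u ^ 2 with hs2def
  have hs2pos : 0 < s2 := by have := hσ u; positivity
  have hR : 0 ≤ R := Real.sqrt_nonneg _
  have hF : 0 ≤ F := frobNorm_nonneg _
  have hS : 0 ≤ S := frobNorm_nonneg _
  set g0 := quadForm (C u u) x with hg0def
  set g1 := quadForm (C u u) z with hg1def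
  set q0 := quadForm Msum x with hq0def
  set q1 := quadForm Msum z with hq1def
  have hg0 : 0 ≤ g0 := by rw [hg0def, hC]; exact quadForm_rankOne_nonneg _ _
  have hg0le : g0 ≤ ((N:ℝ)+1) * F :=
    le_trans (le_abs_self _) (abs_quadForm_le _ _ hx1)
  have hgd : |g1 - g0| ≤ 2 * R * F * d := by
    have h := quadForm_update_diff (C u u) x n' ((δ:ℂ) * x n') hx1 hz1
    rwa [habse] at h
  have hqsum : ∀ y : Fin (N+1) → ℂ,
      (∑ u' ∈ Finset.univ.erase u, quadForm (C u u') y) = quadForm Msum y :=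
    fun y => (quadForm_sum _ _ _).symm
  have hq0 : 0 ≤ q0 := by
    rw [hq0def, ← hqsum]
    exact Finset.sum_nonneg fun u' _ => by rw [hC]; exact quadForm_rankOne_nonneg _ _
  have hq1 : 0 ≤ q1 := by
    rw [hq1def, ← hqsum]
    exact Finset.sum_nonneg fun u' _ => by rw [hC]; exact quadForm_rankOne_nonneg _ _
  have hqd : |q1 - q0| ≤ 2 * R * S * d := by
    have h := quadForm_update_diff Msum x n' ((δ:ℂ) * x n') hx1 hz1
    rwa [habse] at h
  -- objective values
  have hfz : fObj C σ u z = g1 / (q1 + s2) := by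
    simp only [fObj, hqsum, hg1def, hq1def, hs2def]
  have hfx : fObj C σ u x = g0 / (q0 + s2) := by
    simp only [fObj, hqsum, hg0def, hq0def, hs2def]
  set H0 := q0 + s2 with hH0def
  set H1 := q1 + s2 with hH1def
  have hH0 : s2 ≤ H0 := by rw [hH0def]; linarith
  have hH1 : s2 ≤ H1 := by rw [hH1def]; linarith
  have hH0pos : 0 < H0 := lt_of_lt_of_le hs2pos hH0
  have hH1pos : 0 < H1 := lt_of_lt_of_le hs2pos hH1
  -- main Lipschitz estimate
  have hmain : -(Lconst C σ u * d) ≤ g1 / H1 - g0 / H0 := by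
    have key : g1 / H1 - g0 / H0 = ((g1 - g0) * H0 + g0 * (H0 - H1)) / (H1 * H0) := by
      field_simp
      ring
    have e1 : -(2 * R * F * d) * H0 ≤ (g1 - g0) * H0 :=
      mul_le_mul_of_nonneg_right (neg_le_of_abs_le hgd) hH0pos.le
    have e2 : -(((N:ℝ)+1) * F * (2 * R * S * d)) ≤ g0 * (H0 - H1) := by
      have h1 : -(2 * R * S * d) ≤ H0 - H1 := by
        have := (abs_le.1 hqd).2
        rw [hH0def, hH1def]
        linarith
      have h2 : g0 * (-(2 * R * S * d)) ≤ g0 * (H0 - H1) :=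
        mul_le_mul_of_nonneg_left h1 hg0
      have hrs : (0:ℝ) ≤ 2 * R * S * d :=
        mul_nonneg (mul_nonneg (mul_nonneg (by norm_num) hR) hS) hd0
      have h4 : g0 * (2 * R * S * d) ≤ ((N:ℝ)+1) * F * (2 * R * S * d) :=
        mul_le_mul_of_nonneg_right hg0le hrs
      nlinarith [h2, h4]
    have hnum : -((2 * R * F * d) * H0 + ((N:ℝ)+1) * F * (2 * R * S * d))
        ≤ (g1 - g0) * H0 + g0 * (H0 - H1) := by linarith [e1, e2]
    rw [key]
    have hdiv1 : -((2 * R * F * d) * H0 + ((N:ℝ)+1) * F * (2 * R * S * d)) / (H1 * H0)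
        ≤ ((g1 - g0) * H0 + g0 * (H0 - H1)) / (H1 * H0) :=
      (div_le_div_iff_of_pos_right (mul_pos hH1pos hH0pos)).mpr hnum
    refine le_trans ?_ hdiv1
    rw [neg_div, neg_le_neg_iff]
    have c1 : (0:ℝ) ≤ 2 * R * F * d :=
      mul_nonneg (mul_nonneg (mul_nonneg (by norm_num) hR) hF) hd0
    have c2 : (0:ℝ) ≤ ((N:ℝ)+1) * F * (2 * R * S * d) := by
      apply mul_nonneg (mul_nonneg (by positivity) hF)
      exact mul_nonneg (mul_nonneg (mul_nonneg (by norm_num) hR) hS) hd0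
    have split : ((2 * R * F * d) * H0 + ((N:ℝ)+1) * F * (2 * R * S * d)) / (H1 * H0)
        = (2 * R * F * d) / H1 + (((N:ℝ)+1) * F * (2 * R * S * d)) / (H1 * H0) := by
      field_simp
    have b1 : (2 * R * F * d) / H1 ≤ (2 * R * F * d) / s2 :=
      div_le_div₀ c1 le_rfl hs2pos hH1
    have b2 : (((N:ℝ)+1) * F * (2 * R * S * d)) / (H1 * H0)
        ≤ (((N:ℝ)+1) * F * (2 * R * S * d)) / (s2 * s2) :=
      div_le_div₀ c2 le_rfl (by positivity)
        (mul_le_mul hH1 hH0 hs2pos.le (le_trans hs2pos.le hH1))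
    have hLd : Lconst C σ u * d
        = (2 * R * F * d) / s2 + (((N:ℝ)+1) * F * (2 * R * S * d)) / (s2 * s2) := by
      simp only [Lconst, ← hRdef, ← hFdef, ← hMsumdef, ← hSdef, ← hs2def]
      field_simp
    rw [split, hLd]
    exact add_le_add b1 b2
  have heq : (lam - Lconst C σ u) * (δ - 1) * ‖x n'‖
      = lam * d - Lconst C σ u * d := by rw [hddef]; ring
  rw [hfz, hfx, hnorm1, heq]
  have : lam * (norm1 x + d) - lam * norm1 x = lam * d := by ring
  linarith [hmain]
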